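/- There exist constants c_s > 0 and r₀ ∈ (0,1) such that for every r ∈ (0, r₀), the two-dimensional Lebesgue measure of the set {x ∈ (0,1)×(0,1) : |y(x) − 1| < r} is at most c_s · r. -/

import Mathlib

open Real MeasureTheory Filter Set

/-- `y(x₁,x₂) = sin(π x₁) sin(π x₂)`. -/
noncomputable def ybar (x : ℝ × ℝ) : ℝ := Real.sin (π * x.1) * Real.sin (π * x.2)

lemma aux_coord {r x : ℝ} (hr : 0 < r) (hx : x ∈ Set.Ioo (0:ℝ) 1)
    (h : 1 - r < Real.sin (π * x)) : |x - 1/2| < Real.sqrt (r/2) := by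
  have hcos : Real.sin (π * x) = Real.cos (π * (x - 1/2)) := by
    rw [show π * x = π * (x - 1/2) + π/2 by ring, Real.sin_add_pi_div_two]
  have habs : |π * (x - 1/2)| ≤ π := by
    rw [abs_mul, abs_of_pos Real.pi_pos]
    have h1 := hx.1; have h2 := hx.2
    have : |x - 1/2| ≤ 1 := by rw [abs_le]; constructor <;> linarith
    nlinarith [Real.pi_pos]
  have hb := Real.cos_le_one_sub_mul_cos_sq habs
  rw [hcos] at h
  have hpi : (0:ℝ) < π ^ 2 := by positivity
  have hsq : (x - 1/2)^2 < r/2 := by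
    have : 2 / π ^ 2 * (π * (x - 1/2)) ^ 2 = 2 * (x - 1/2)^2 := by
      field_simp
    rw [this] at hb
    linarith
  calc |x - 1/2| = Real.sqrt ((x - 1/2)^2) := (Real.sqrt_sq_eq_abs _).symm
    _ < Real.sqrt (r/2) := Real.sqrt_lt_sqrt (sq_nonneg _) hsq

theorem stmt0 :
    ∃ cs : ℝ, 0 < cs ∧ ∃ r₀ : ℝ, r₀ ∈ Set.Ioo (0:ℝ) 1 ∧
      ∀ r ∈ Set.Ioo (0:ℝ) r₀,
        volume {x : ℝ × ℝ | x ∈ Set.Ioo (0:ℝ) 1 ×ˢ Set.Ioo (0:ℝ) 1 ∧ |ybar x - 1| < r}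
          ≤ ENNReal.ofReal (cs * r) := by
  refine ⟨2, by norm_num, 1/2, by norm_num, ?_⟩
  intro r hrm
  obtain ⟨hr, hr2⟩ := hrm
  set δ := Real.sqrt (r/2) with hδ
  have hδ0 : 0 ≤ δ := Real.sqrt_nonneg _
  have hsub : {x : ℝ × ℝ | x ∈ Set.Ioo (0:ℝ) 1 ×ˢ Set.Ioo (0:ℝ) 1 ∧ |ybar x - 1| < r}
      ⊆ Set.Ioo (1/2 - δ) (1/2 + δ) ×ˢ Set.Ioo (1/2 - δ) (1/2 + δ) := by
    rintro ⟨x₁, x₂⟩ ⟨⟨hx₁, hx₂⟩, habs⟩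
    have h1pos : 0 < Real.sin (π * x₁) :=
      Real.sin_pos_of_pos_of_lt_pi (by nlinarith [hx₁.1, Real.pi_pos])
        (by nlinarith [hx₁.2, Real.pi_pos])
    have h2pos : 0 < Real.sin (π * x₂) :=
      Real.sin_pos_of_pos_of_lt_pi (by nlinarith [hx₂.1, Real.pi_pos])
        (by nlinarith [hx₂.2, Real.pi_pos])
    have h1le : Real.sin (π * x₁) ≤ 1 := Real.sin_le_one _
    have h2le : Real.sin (π * x₂) ≤ 1 := Real.sin_le_one _
    have hy : 1 - r < Real.sin (π * x₁) * Real.sin (π * x₂) := by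
      have := abs_lt.mp habs
      simp only [ybar] at this
      linarith [this.1]
    have hs1 : 1 - r < Real.sin (π * x₁) := by nlinarith
    have hs2 : 1 - r < Real.sin (π * x₂) := by nlinarith
    have h1 := aux_coord hr hx₁ hs1
    have h2 := aux_coord hr hx₂ hs2
    rw [abs_lt] at h1 h2
    exact ⟨⟨by linarith [h1.1], by linarith [h1.2]⟩, ⟨by linarith [h2.1], by linarith [h2.2]⟩⟩
  calc volume {x : ℝ × ℝ | x ∈ Set.Ioo (0:ℝ) 1 ×ˢ Set.Ioo (0:ℝ) 1 ∧ |ybar x - 1| < r}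
      ≤ volume (Set.Ioo (1/2 - δ) (1/2 + δ) ×ˢ Set.Ioo (1/2 - δ) (1/2 + δ)) :=
        measure_mono hsub
    _ = ENNReal.ofReal (2 * δ) * ENNReal.ofReal (2 * δ) := by
        rw [show (volume : Measure (ℝ × ℝ)) = (volume : Measure ℝ).prod volume from rfl,
          Measure.prod_prod, Real.volume_Ioo]
        norm_num
        ring_nf
        rw [ENNReal.ofReal_mul hδ0, ENNReal.ofReal_ofNat]
        ring
    _ = ENNReal.ofReal (2 * r) := by
        rw [← ENNReal.ofReal_mul (by linarith)]
        congr 1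
        have : δ * δ = r / 2 := Real.mul_self_sqrt (by linarith)
        nlinarith
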